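/- arXiv:1103.1268 — 9 statements merged into one kernel-verified Lean document; each statement's English description precedes it below -/
import Mathlib

section
/- Let a ≤ b be integers, let w be a positive integer, and let x, y be complex numbers such that x+1 is not a nonpositive integer and none of the complex numbers y+k+1 and x−y−k+1 (for a ≤ k ≤ b) is a nonpositive integer. Then Σ_{k=a}^{b−1} [(−y−k−1)^w − (x−y−k+1)^w] · (−1)^{wk} · binom(x, y+k)^{−w} = (x+1)^w · [ (−1)^{wb} · binom(x+1, y+b)^{−w} − (−1)^{wa} · binom(x+1, y+a)^{−w} ]. -/
open Finset

/-- Generalized binomial coefficient via the complex Gamma function. -/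
noncomputable def cbinom (u v : ℂ) : ℂ :=
  Complex.Gamma (u + 1) / (Complex.Gamma (v + 1) * Complex.Gamma (u - v + 1))

theorem tele (a : ℤ) (f : ℤ → ℂ) : ∀ b, a ≤ b → ∑ k ∈ Finset.Ico a b, (f (k+1) - f k) = f b - f a := by
  refine Int.le_induction ?_ ?_
  · simp
  · intro b hb ih
    have h : Finset.Ico a (b+1) = insert b (Finset.Ico a b) := by
      rw [Finset.Ico_insert_right hb, show Ico a (b+1) = Icc a b by ext k; simp]
    rw [h, Finset.sum_insert (by simp), ih]
    ring

theorem binomial_identity_three (a b : ℤ) (hab : a ≤ b) (w : ℕ) (hw : 0 < w) (x y : ℂ)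
    (hx : ∀ m : ℕ, x + 1 ≠ -(m : ℂ))
    (h1 : ∀ k : ℤ, a ≤ k → k ≤ b → ∀ m : ℕ, y + (k : ℂ) + 1 ≠ -(m : ℂ))
    (h2 : ∀ k : ℤ, a ≤ k → k ≤ b → ∀ m : ℕ, x - y - (k : ℂ) + 1 ≠ -(m : ℂ)) :
    ∑ k ∈ Finset.Ico a b,
        (((-y - (k : ℂ) - 1) ^ w - (x - y - (k : ℂ) + 1) ^ w) * (-1 : ℂ) ^ ((w : ℤ) * k) *
          cbinom x (y + (k : ℂ)) ^ (-(w : ℤ))) =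
    (x + 1) ^ w * ((-1 : ℂ) ^ ((w : ℤ) * b) * cbinom (x + 1) (y + (b : ℂ)) ^ (-(w : ℤ)) -
                   (-1 : ℂ) ^ ((w : ℤ) * a) * cbinom (x + 1) (y + (a : ℂ)) ^ (-(w : ℤ))) := by
  set f : ℤ → ℂ := fun k => (x+1)^w * ((-1 : ℂ) ^ ((w : ℤ) * k) * cbinom (x + 1) (y + (k : ℂ)) ^ (-(w : ℤ))) with hf
  have key : ∀ k ∈ Finset.Ico a b,
      (((-y - (k : ℂ) - 1) ^ w - (x - y - (k : ℂ) + 1) ^ w) * (-1 : ℂ) ^ ((w : ℤ) * k) *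
          cbinom x (y + (k : ℂ)) ^ (-(w : ℤ))) = f (k+1) - f k := by
    intro k hk
    simp only [Finset.mem_Ico] at hk
    obtain ⟨hak, hkb⟩ := hk
    have hkb' : k ≤ b := le_of_lt hkb
    have hak1 : a ≤ k + 1 := by omega
    have hkb1 : k + 1 ≤ b := hkb
    have hx1 : x + 1 ≠ 0 := by simpa using hx 0
    have hyk : y + (k:ℂ) + 1 ≠ 0 := by simpa using h1 k hak hkb' 0
    have hxyk : x - y - (k:ℂ) + 1 ≠ 0 := by simpa using h2 k hak hkb' 0
    have hG : Complex.Gamma (x + 1) ≠ 0 := Complex.Gamma_ne_zero (hx)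
    have hA : Complex.Gamma (y + (k:ℂ) + 1) ≠ 0 := Complex.Gamma_ne_zero (h1 k hak hkb')
    have hB : Complex.Gamma (x - y - (k:ℂ) + 1) ≠ 0 := Complex.Gamma_ne_zero (h2 k hak hkb')
    set G := Complex.Gamma (x + 1)
    set A := Complex.Gamma (y + (k:ℂ) + 1)
    set B := Complex.Gamma (x - y - (k:ℂ) + 1)
    have c1 : cbinom x (y + (k:ℂ)) = G / (A * B) := by
      unfold cbinom
      rw [show x - (y + (k:ℂ)) + 1 = x - y - (k:ℂ) + 1 by ring]
    have c2 : cbinom (x+1) (y + (k:ℂ)) = ((x+1) * G) / (A * ((x - y - (k:ℂ) + 1) * B)) := by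
      unfold cbinom
      rw [show x + 1 + 1 = (x + 1) + 1 by ring, Complex.Gamma_add_one _ hx1,
        show x + 1 - (y + (k:ℂ)) + 1 = (x - y - (k:ℂ) + 1) + 1 by ring,
        Complex.Gamma_add_one _ hxyk]
    have c3 : cbinom (x+1) (y + ((k+1 : ℤ):ℂ)) = ((x+1) * G) / (((y + (k:ℂ) + 1) * A) * B) := by
      unfold cbinom
      push_cast
      rw [show x + 1 + 1 = (x + 1) + 1 by ring, Complex.Gamma_add_one _ hx1,
        show y + ((k:ℂ) + 1) + 1 = (y + (k:ℂ) + 1) + 1 by ring,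
        Complex.Gamma_add_one _ hyk,
        show x + 1 - (y + ((k:ℂ) + 1)) + 1 = x - y - (k:ℂ) + 1 by ring]
    have hs : (-1 : ℂ) ^ ((w : ℤ) * (k+1)) = (-1 : ℂ) ^ ((w : ℤ) * k) * (-1:ℂ)^w := by
      rw [mul_add, mul_one, zpow_add₀ (by norm_num : (-1:ℂ) ≠ 0), zpow_natCast]
    have hneg : (-y - (k:ℂ) - 1) ^ w = (-1:ℂ)^w * (y + (k:ℂ) + 1)^w := by
      rw [show (-y - (k:ℂ) - 1) = -(y + (k:ℂ) + 1) by ring, neg_pow]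
    simp only [hf, c1, c2, c3, hs, hneg, zpow_neg, zpow_natCast, div_pow, inv_div, mul_pow]
    have hsne : (-1 : ℂ) ^ ((w : ℤ) * k) ≠ 0 := zpow_ne_zero _ (by norm_num)
    field_simp
  rw [Finset.sum_congr rfl key, tele a f b hab, hf]
  ring
end

section
/- For every nonnegative integer n, 3 · Σ_{k=0}^{2n} (−1)^k · k · (2n−k) · C(2n,k)^3 = (−1)^n · 4 · n^2 · C(2n,n) · C(3n,n), as an identity of integers, where C denotes the ordinary binomial coefficient. -/
open Finset

def Sc (n k : ℤ) : ℤ :=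
  k^3*(16+216*n+1248*n^2+3880*n^3+6944*n^4+7152*n^5+3936*n^6+896*n^7)
  + k^4*(-72-852*n-4212*n^2-11016*n^3-16264*n^4-13416*n^5-5632*n^6-896*n^7)
  + k^5*(132+1350*n+5580*n^2+11774*n^3+13296*n^4+7584*n^5+1696*n^6)
  + k^6*(-126-1095*n-3663*n^2-5872*n^3-4504*n^4-1320*n^5)
  + k^7*(66+477*n+1227*n^2+1342*n^3+528*n^4)
  + k^8*(-18-105*n-189*n^2-108*n^3)
  + k^9*(2+9*n+9*n^2)

def Pc (n k : ℤ) : ℤ :=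
  ((2*n+1)*(2*n+2))^3*n^2*k*(2*n+2-k) + 3*(3*n+1)*(3*n+2)*k*(2*n-k)*((2*n+1-k)*(2*n+2-k))^3

lemma star (n k : ℤ) :
    (2*n+2-k)^3 * Sc n (k+1) + (k+1)^3 * Sc n k = -2*n*(k+1)^3 * Pc n k := by
  simp only [Sc, Pc]; ring

def Fi (m k : ℕ) : ℤ := (-1:ℤ)^k * k * (2*(m:ℤ) - k) * ((2*m).choose k : ℤ)^3

def Tt (m : ℕ) : ℤ := ∑ k ∈ Finset.range (2*m+1), Fi m k

-- cube helper
lemma cube_eq {a b c d : ℤ} (h : a * b = c * d) : a^3 * b^3 = c^3 * d^3 := by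
  linear_combination (a^2*b^2 + a*b*c*d + c^2*d^2) * h

-- choose relations, cast to ℤ
lemma rel1 (m k : ℕ) (hk : k ≤ m + 1) :
    ((m:ℤ) + 1 - k) * ((m+1).choose k : ℤ) = ((m:ℤ)+1) * (m.choose k : ℤ) := by
  have h0 := Nat.choose_mul_succ_eq m k
  have h2 : ((m.choose k : ℤ) * ((m:ℤ)+1)) = ((m+1).choose k : ℤ) * (((m+1-k : ℕ) : ℤ)) := by
    exact_mod_cast h0
  rw [Nat.cast_sub hk] at h2
  push_cast at h2
  linarith

lemma rel2 (m k : ℕ) :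
    ((k:ℤ) + 1) * ((m+1).choose (k+1) : ℤ) = ((m:ℤ)+1) * (m.choose k : ℤ) := by
  have h0 := Nat.add_one_mul_choose_eq m k
  have h2 : (((m:ℤ))+1) * (m.choose k : ℤ) = ((m+1).choose (k+1) : ℤ) * ((k:ℤ)+1) := by
    exact_mod_cast h0
  linarith

section Step
variable (n : ℕ)

-- h5 : (k+1) * c(k+1) = (2n+2-k) * c k   for k ≤ 2n+2
lemma h5 (k : ℕ) (hk : k ≤ 2*n+2) :
    ((k:ℤ)+1) * ((2*n+2).choose (k+1) : ℤ) = (2*(n:ℤ)+2-k) * ((2*n+2).choose k : ℤ) := by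
  have a1 := rel2 (2*n+1) k
  have a2 := rel1 (2*n+1) k hk
  push_cast at a1 a2
  have e1 : (2*n+1+1) = 2*n+2 := rfl
  rw [e1] at a1 a2
  linarith

-- h4 : (2n+1-k)*(2n+2-k) * c k = (2n+1)*(2n+2) * e k  for k ≤ 2n+2
lemma h4 (k : ℕ) (hk : k ≤ 2*n+2) :
    (2*(n:ℤ)+1-k) * (2*(n:ℤ)+2-k) * ((2*n+2).choose k : ℤ)
      = (2*(n:ℤ)+1) * (2*(n:ℤ)+2) * ((2*n).choose k : ℤ) := by
  rcases Nat.lt_or_ge k (2*n+2) with h | h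
  · have hk1 : k ≤ 2*n+1 := by omega
    have a2 := rel1 (2*n+1) k (by omega)
    have a3 := rel1 (2*n) k hk1
    push_cast at a2 a3
    have e1 : (2*n+1+1) = 2*n+2 := rfl
    have e2 : (2*n+1) = 2*n+1 := rfl
    rw [e1] at a2
    nlinarith [a2, a3]
  · have hk2 : k = 2*n+2 := le_antisymm hk h
    subst hk2
    have : (2*n).choose (2*n+2) = 0 := Nat.choose_eq_zero_of_lt (by omega)
    rw [this]
    push_cast
    ring

-- the key telescoping step
lemma step (k : ℕ) (hk : k ≤ 2*n+2) :
    (-1:ℤ)^(k+1) * ((2*n+2).choose (k+1) : ℤ)^3 * Sc n (k+1)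
      - (-1:ℤ)^k * ((2*n+2).choose k : ℤ)^3 * Sc n k
    = 2*(n:ℤ)*((2*(n:ℤ)+1)*(2*(n:ℤ)+2))^3 *
        ((n:ℤ)^2 * ((-1:ℤ)^k * k * (2*(n:ℤ)+2 - k) * ((2*n+2).choose k : ℤ)^3)
          + 3*(3*(n:ℤ)+1)*(3*(n:ℤ)+2) * ((-1:ℤ)^k * k * (2*(n:ℤ) - k) * ((2*n).choose k : ℤ)^3)) := by
  have hne : ((k:ℤ)+1)^3 ≠ 0 := by positivity
  apply mul_left_cancel₀ hne
  have h5c := cube_eq (h5 n k hk)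
  have h4c := cube_eq (h4 n k hk)
  have hstar := star (n:ℤ) (k:ℤ)
  simp only [Pc] at hstar
  set c1 : ℤ := ((2*n+2).choose (k+1) : ℤ) with hc1
  set c0 : ℤ := ((2*n+2).choose k : ℤ) with hc0
  set e0 : ℤ := ((2*n).choose k : ℤ) with he0
  rw [pow_succ]
  linear_combination (-((-1:ℤ)^k) * Sc (n:ℤ) ((k:ℤ)+1)) * h5c
    + (-((-1:ℤ)^k) * c0^3) * hstar
    + (2*(n:ℤ)*((k:ℤ)+1)^3*((-1:ℤ)^k)*3*(3*(n:ℤ)+1)*(3*(n:ℤ)+2)*(k:ℤ)*(2*(n:ℤ)-(k:ℤ))) * h4c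

end Step

lemma recur (n : ℕ) (hn : 1 ≤ n) :
    (n:ℤ)^2 * Tt (n+1) + 3*(3*(n:ℤ)+1)*(3*(n:ℤ)+2) * Tt n = 0 := by
  have htel := Finset.sum_range_sub
    (f := fun k => (-1:ℤ)^k * ((2*n+2).choose k : ℤ)^3 * Sc n k) (2*n+3)
  have h1 : ∀ k ∈ Finset.range (2*n+3),
      ((-1:ℤ)^(k+1) * ((2*n+2).choose (k+1) : ℤ)^3 * Sc n (k+1)
        - (-1:ℤ)^k * ((2*n+2).choose k : ℤ)^3 * Sc n k)
      = 2*(n:ℤ)*((2*(n:ℤ)+1)*(2*(n:ℤ)+2))^3 *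
          ((n:ℤ)^2 * Fi (n+1) k + 3*(3*(n:ℤ)+1)*(3*(n:ℤ)+2) * Fi n k) := by
    intro k hk
    rw [Finset.mem_range] at hk
    have hs := step n k (by omega)
    simp only [Fi]
    rw [show 2*(n+1) = 2*n+2 from by ring]
    push_cast
    push_cast at hs
    linear_combination hs
  push_cast at htel
  rw [Finset.sum_congr rfl h1] at htel
  have hz1 : ((2*n+2).choose (2*n+3) : ℤ) = 0 := by
    rw [Nat.choose_eq_zero_of_lt (by omega)]; rfl
  have hz0 : Sc (n:ℤ) 0 = 0 := by simp [Sc]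
  rw [hz1] at htel
  norm_num [hz0] at htel
  -- htel : ∑ k in range (2n+3), 2nD*(n^2 * Fi (n+1) k + C * Fi n k) = 0
  have hT1 : Tt (n+1) = ∑ k ∈ Finset.range (2*n+3), Fi (n+1) k := by
    rw [Tt, show 2*(n+1)+1 = 2*n+3 from by ring]
  have z1 : Fi n (2*n+1) = 0 := by
    simp [Fi, Nat.choose_eq_zero_of_lt (show 2*n < 2*n+1 by omega)]
  have z2 : Fi n (2*n+2) = 0 := by
    simp [Fi, Nat.choose_eq_zero_of_lt (show 2*n < 2*n+2 by omega)]
  have hTn : ∑ k ∈ Finset.range (2*n+3), Fi n k = Tt n := by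
    rw [show 2*n+3 = (2*n+1)+1+1 from rfl, Finset.sum_range_succ, Finset.sum_range_succ,
      z1, z2, Tt]
    ring
  have key : 2*(n:ℤ)*((2*(n:ℤ)+1)*(2*(n:ℤ)+2))^3 *
      ((n:ℤ)^2 * Tt (n+1) + 3*(3*(n:ℤ)+1)*(3*(n:ℤ)+2) * Tt n) = 0 := by
    rw [hT1, ← hTn, ← htel]
    simp only [mul_add, Finset.mul_sum, ← Finset.sum_add_distrib]
  have hn' : (0:ℤ) < (n:ℤ) := by exact_mod_cast hn
  have hnz : 2*(n:ℤ)*((2*(n:ℤ)+1)*(2*(n:ℤ)+2))^3 ≠ 0 := by positivity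
  exact (mul_eq_zero.mp key).resolve_left hnz

lemma choose_step (n : ℕ) :
    3*(3*(n:ℤ)+1)*(3*(n:ℤ)+2) * ((2*n).choose n : ℤ) * ((3*n).choose n : ℤ)
      = ((n:ℤ)+1)^2 * ((2*n+2).choose (n+1) : ℤ) * ((3*n+3).choose (n+1) : ℤ) := by
  have key : 3*(3*(n:ℚ)+1)*(3*(n:ℚ)+2) * ((2*n).choose n : ℚ) * ((3*n).choose n : ℚ)
      = ((n:ℚ)+1)^2 * ((2*n+2).choose (n+1) : ℚ) * ((3*n+3).choose (n+1) : ℚ) := by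
    have f0 : ∀ m : ℕ, ((m.factorial : ℚ)) ≠ 0 :=
      fun m => Nat.cast_ne_zero.2 (Nat.factorial_ne_zero m)
    have ha := Nat.choose_mul_factorial_mul_factorial (show n ≤ 2*n by omega)
    rw [show 2*n-n = n from by omega] at ha
    have hb := Nat.choose_mul_factorial_mul_factorial (show n ≤ 3*n by omega)
    rw [show 3*n-n = 2*n from by omega] at hb
    have hc := Nat.choose_mul_factorial_mul_factorial (show n+1 ≤ 2*n+2 by omega)
    rw [show 2*n+2-(n+1) = n+1 from by omega] at hc
    have hd := Nat.choose_mul_factorial_mul_factorial (show n+1 ≤ 3*n+3 by omega)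
    rw [show 3*n+3-(n+1) = 2*n+2 from by omega] at hd
    have haQ : ((2*n).choose n : ℚ) * (n.factorial : ℚ) * (n.factorial : ℚ)
        = ((2*n).factorial : ℚ) := by exact_mod_cast ha
    have hbQ : ((3*n).choose n : ℚ) * (n.factorial : ℚ) * ((2*n).factorial : ℚ)
        = ((3*n).factorial : ℚ) := by exact_mod_cast hb
    have hcQ : ((2*n+2).choose (n+1) : ℚ) * ((n+1).factorial : ℚ) * ((n+1).factorial : ℚ)
        = ((2*n+2).factorial : ℚ) := by exact_mod_cast hc
    have hdQ : ((3*n+3).choose (n+1) : ℚ) * ((n+1).factorial : ℚ) * ((2*n+2).factorial : ℚ)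
        = ((3*n+3).factorial : ℚ) := by exact_mod_cast hd
    have e1 : ((2*n+2).factorial : ℚ) = (2*(n:ℚ)+2)*(2*(n:ℚ)+1)*((2*n).factorial : ℚ) := by
      rw [show 2*n+2 = (2*n+1)+1 from rfl, Nat.factorial_succ, Nat.factorial_succ]
      push_cast; ring
    have e2 : ((3*n+3).factorial : ℚ)
        = (3*(n:ℚ)+3)*(3*(n:ℚ)+2)*(3*(n:ℚ)+1)*((3*n).factorial : ℚ) := by
      rw [show 3*n+3 = ((3*n+1)+1)+1 from rfl, Nat.factorial_succ, Nat.factorial_succ,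
        Nat.factorial_succ]
      push_cast; ring
    have e3 : (((n+1)).factorial : ℚ) = ((n:ℚ)+1)*(n.factorial : ℚ) := by
      rw [Nat.factorial_succ]; push_cast; ring
    have ha' : ((2*n).choose n : ℚ)
        = ((2*n).factorial : ℚ)/((n.factorial : ℚ)*(n.factorial : ℚ)) := by
      field_simp; linear_combination haQ
    have hb' : ((3*n).choose n : ℚ)
        = ((3*n).factorial : ℚ)/((n.factorial : ℚ)*((2*n).factorial : ℚ)) := by
      field_simp; linear_combination hbQ
    have hc' : ((2*n+2).choose (n+1) : ℚ)
        = ((2*n+2).factorial : ℚ)/(((n+1).factorial : ℚ)*((n+1).factorial : ℚ)) := by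
      field_simp; linear_combination hcQ
    have hd' : ((3*n+3).choose (n+1) : ℚ)
        = ((3*n+3).factorial : ℚ)/(((n+1).factorial : ℚ)*((2*n+2).factorial : ℚ)) := by
      field_simp; linear_combination hdQ
    rw [ha', hb', hc', hd', e1, e2, e3]
    have h1 := f0 n
    have h2 := f0 (2*n)
    have h3 := f0 (3*n)
    have hq : ((n:ℚ)+1) ≠ 0 := by positivity
    field_simp
  exact_mod_cast key

lemma main_all (m : ℕ) :
    3 * Tt m = (-1:ℤ)^m * 4 * (m:ℤ)^2 * ((2*m).choose m : ℤ) * ((3*m).choose m : ℤ) := by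
  induction m with
  | zero => simp [Tt, Fi]
  | succ p ih =>
    rcases Nat.eq_zero_or_pos p with hp | hp
    · subst hp
      simp [Tt, Fi, Finset.sum_range_succ]
    · have hrec := recur p hp
      have hcs := choose_step p
      have hne : ((p:ℤ))^2 ≠ 0 := by
        have : (0:ℤ) < (p:ℤ) := by exact_mod_cast hp
        positivity
      apply mul_left_cancel₀ hne
      rw [show 2*(p+1) = 2*p+2 from by ring, show 3*(p+1) = 3*p+3 from by ring, pow_succ]
      push_cast
      linear_combination 3 * hrec + (-3*(3*(p:ℤ)+1)*(3*(p:ℤ)+2)) * ih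
        + (-((-1:ℤ)^p)*4*(p:ℤ)^2) * hcs

theorem dixon_weighted (n : ℕ) :
    3 * ∑ k ∈ Finset.range (2 * n + 1),
        (-1 : ℤ) ^ k * (k : ℤ) * ((2 * n : ℤ) - (k : ℤ)) * (((2 * n).choose k : ℤ)) ^ 3 =
    (-1 : ℤ) ^ n * 4 * (n : ℤ) ^ 2 * ((2 * n).choose n : ℤ) * ((3 * n).choose n : ℤ) := by
  have := main_all n
  simpa [Tt, Fi] using this
end

section
/- Let a ≤ b be integers, let w be a positive integer, and let x, y be complex numbers such that none of the complex numbers y+1, x+k+1 (for a ≤ k ≤ b), and x+k−y+1 (for a ≤ k ≤ b) is a nonpositive integer, and such that x+a+i ≠ 0 for all integers 1 ≤ i ≤ b−a. Then Σ_{k=a}^{b−1} [ (x+k+1)^w · H1(x+a, k−a+1) − (x−y+k)^w · H1(x+a, k−a) ] · binom(x+k, y)^w = (y+1)^w · binom(x+b, y+1)^w · H1(x+a, b−a). -/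
open Finset

/-- Generalized harmonic number of order 1 with complex offset `c`:
`H1 c n = ∑_{i=1}^{n} 1/(c+i)` (zero if `n ≤ 0`). -/
noncomputable def H1 (c : ℂ) (n : ℤ) : ℂ :=
  ∑ i ∈ Finset.range n.toNat, 1 / (c + (i : ℂ) + 1)

private lemma cancel_aux (a b c : ℂ) (ha : a ≠ 0) : a * (b / (a * c)) = b / c := by
  rw [mul_div_assoc', mul_div_mul_left _ _ ha]

private lemma keyA (z y : ℂ) (hy : y + 1 ≠ 0) (hz : z + 1 ≠ 0) :
    (y + 1) * cbinom (z + 1) (y + 1) = (z + 1) * cbinom z y := by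
  unfold cbinom
  rw [show z + 1 + 1 = (z + 1) + 1 from rfl, Complex.Gamma_add_one _ hz,
      show y + 1 + 1 = (y + 1) + 1 from rfl, Complex.Gamma_add_one _ hy,
      show z + 1 - (y + 1) + 1 = z - y + 1 by ring,
      show (y + 1) * Complex.Gamma (y + 1) * Complex.Gamma (z - y + 1)
        = (y + 1) * (Complex.Gamma (y + 1) * Complex.Gamma (z - y + 1)) by ring,
      cancel_aux _ _ _ hy, mul_div_assoc]

private lemma keyB (z y : ℂ) (hy : y + 1 ≠ 0) :
    (y + 1) * cbinom z (y + 1) = (z - y) * cbinom z y := by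
  unfold cbinom
  rw [show y + 1 + 1 = (y + 1) + 1 from rfl, Complex.Gamma_add_one _ hy,
      show z - (y + 1) + 1 = z - y by ring]
  by_cases hzy : z - y = 0
  · rw [hzy, Complex.Gamma_zero]
    simp
  · rw [Complex.Gamma_add_one _ hzy,
        show (y + 1) * Complex.Gamma (y + 1) * Complex.Gamma (z - y)
          = (y + 1) * (Complex.Gamma (y + 1) * Complex.Gamma (z - y)) by ring,
        cancel_aux _ _ _ hy,
        show Complex.Gamma (y + 1) * ((z - y) * Complex.Gamma (z - y))
          = (z - y) * (Complex.Gamma (y + 1) * Complex.Gamma (z - y)) by ring,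
        cancel_aux _ _ _ hzy]

theorem harmonic_identity_1a (a b : ℤ) (hab : a ≤ b) (w : ℕ) (hw : 0 < w) (x y : ℂ)
    (hy : ∀ m : ℕ, y + 1 ≠ -(m : ℂ))
    (hx1 : ∀ k : ℤ, a ≤ k → k ≤ b → ∀ m : ℕ, x + (k : ℂ) + 1 ≠ -(m : ℂ))
    (hx2 : ∀ k : ℤ, a ≤ k → k ≤ b → ∀ m : ℕ, x + (k : ℂ) - y + 1 ≠ -(m : ℂ))
    (hh : ∀ i : ℤ, 1 ≤ i → i ≤ b - a → x + (a : ℂ) + (i : ℂ) ≠ 0) :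
    ∑ k ∈ Finset.Ico a b,
        (((x + (k : ℂ) + 1) ^ w * H1 (x + (a : ℂ)) (k - a + 1) -
          (x - y + (k : ℂ)) ^ w * H1 (x + (a : ℂ)) (k - a)) * cbinom (x + (k : ℂ)) y ^ w) =
    (y + 1) ^ w * cbinom (x + (b : ℂ)) (y + 1) ^ w * H1 (x + (a : ℂ)) (b - a) := by
  have hy0 : y + 1 ≠ 0 := by simpa using hy 0
  obtain ⟨d, rfl⟩ : ∃ d : ℕ, b = a + d := ⟨(b - a).toNat, by omega⟩
  clear hab
  induction d with
  | zero => simp [H1]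
  | succ n ih =>
    have ih' := ih (fun k hk1 hk2 m => hx1 k hk1 (by omega) m)
      (fun k hk1 hk2 m => hx2 k hk1 (by omega) m)
      (fun i hi1 hi2 => hh i hi1 (by omega))
    rw [show (a + ((n+1:ℕ)) : ℤ) = (a + (n:ℕ)) + 1 by push_cast; ring]
    have hins : Finset.Ico a (a + (n:ℤ) + 1) = insert (a + (n:ℤ)) (Finset.Ico a (a + (n:ℤ))) := by
      ext k
      simp only [Finset.mem_Ico, Finset.mem_insert]
      omega
    rw [hins, Finset.sum_insert Finset.right_notMem_Ico, ih']
    have hz : x + ((a:ℂ) + (n:ℂ)) + 1 ≠ 0 := by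
      have := hx1 (a + n) (by omega) (by omega) 0
      push_cast at this ⊢
      simpa using this
    push_cast
    rw [show a + (n:ℤ) - a = (n:ℤ) by ring, show a + (n:ℤ) + 1 - a = (n:ℤ) + 1 by ring,
        show x + ((a:ℂ) + (n:ℂ) + 1) = x + ((a:ℂ) + (n:ℂ)) + 1 by ring]
    have hA : (y + 1) ^ w * cbinom (x + ((a:ℂ) + (n:ℂ)) + 1) (y + 1) ^ w
        = (x + ((a:ℂ) + (n:ℂ)) + 1) ^ w * cbinom (x + ((a:ℂ) + (n:ℂ))) y ^ w := by
      rw [← mul_pow, keyA _ _ hy0 hz, mul_pow]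
    have hB : (y + 1) ^ w * cbinom (x + ((a:ℂ) + (n:ℂ))) (y + 1) ^ w
        = (x + ((a:ℂ) + (n:ℂ)) - y) ^ w * cbinom (x + ((a:ℂ) + (n:ℂ))) y ^ w := by
      rw [← mul_pow, keyB _ _ hy0, mul_pow]
    linear_combination H1 (x + (a:ℂ)) (n:ℤ) * hB - H1 (x + (a:ℂ)) ((n:ℤ) + 1) * hA
end

section
/- Let a ≤ b be integers, let w be a positive integer, and let x, y be complex numbers such that x is not a nonpositive integer, none of the complex numbers y+k+1 and x−y−k+1 (for a−1 ≤ k ≤ b) is a nonpositive integer, and y−x+a−1+i ≠ 0 for all integers 1 ≤ i ≤ b−a. Then Σ_{k=a}^{b−1} [ (y−x+k)^w · H1(y−x+a−1, k−a+1) − (y+k)^w · H1(y−x+a−1, k−a) ] · (−1)^{wk} · binom(x, y+k)^w = x^w · (−1)^{wb} · binom(x−1, y+b−1)^w · H1(y−x+a−1, b−a). -/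
open Finset

lemma cbinom_keyA (x v : ℂ) (hx0 : x ≠ 0) (hxv : x - v ≠ 0)
    (hg1 : Complex.Gamma (v + 1) ≠ 0) (hg2 : Complex.Gamma (x - v) ≠ 0) :
    x * cbinom (x - 1) v = (x - v) * cbinom x v := by
  unfold cbinom
  rw [show x - 1 + 1 = x by ring, show x - 1 - v + 1 = x - v by ring,
    Complex.Gamma_add_one x hx0, Complex.Gamma_add_one _ hxv]
  field_simp

lemma cbinom_keyB (x v : ℂ) (hx0 : x ≠ 0) (hv : v ≠ 0)
    (hg1 : Complex.Gamma v ≠ 0) (hg2 : Complex.Gamma (x - v + 1) ≠ 0) :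
    x * cbinom (x - 1) (v - 1) = v * cbinom x v := by
  unfold cbinom
  rw [show x - 1 + 1 = x by ring, show x - 1 - (v - 1) + 1 = x - v + 1 by ring,
    show v - 1 + 1 = v by ring,
    Complex.Gamma_add_one x hx0, Complex.Gamma_add_one v hv]
  field_simp

theorem harmonic_identity_2a (a b : ℤ) (hab : a ≤ b) (w : ℕ) (hw : 0 < w) (x y : ℂ)
    (hx : ∀ m : ℕ, x ≠ -(m : ℂ))
    (h1 : ∀ k : ℤ, a - 1 ≤ k → k ≤ b → ∀ m : ℕ, y + (k : ℂ) + 1 ≠ -(m : ℂ))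
    (h2 : ∀ k : ℤ, a - 1 ≤ k → k ≤ b → ∀ m : ℕ, x - y - (k : ℂ) + 1 ≠ -(m : ℂ))
    (hh : ∀ i : ℤ, 1 ≤ i → i ≤ b - a → y - x + (a : ℂ) - 1 + (i : ℂ) ≠ 0) :
    ∑ k ∈ Finset.Ico a b,
        (((y - x + (k : ℂ)) ^ w * H1 (y - x + (a : ℂ) - 1) (k - a + 1) -
          (y + (k : ℂ)) ^ w * H1 (y - x + (a : ℂ) - 1) (k - a)) *
          ((-1 : ℂ) ^ ((w : ℤ) * k) * cbinom x (y + (k : ℂ)) ^ w)) =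
    x ^ w * (-1 : ℂ) ^ ((w : ℤ) * b) * cbinom (x - 1) (y + (b : ℂ) - 1) ^ w *
      H1 (y - x + (a : ℂ) - 1) (b - a) := by
  have hx0 : x ≠ 0 := by simpa using hx 0
  have EE : ((-1 : ℂ) ^ w) * ((-1 : ℂ) ^ w) = 1 := by rw [← mul_pow]; norm_num
  set c : ℂ := y - x + (a : ℂ) - 1 with hc
  have step : ∀ k : ℤ, a ≤ k → k < b →
      (((y - x + (k : ℂ)) ^ w * H1 c (k - a + 1) -
        (y + (k : ℂ)) ^ w * H1 c (k - a)) *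
        ((-1 : ℂ) ^ ((w : ℤ) * k) * cbinom x (y + (k : ℂ)) ^ w)) =
      (x ^ w * (-1 : ℂ) ^ ((w : ℤ) * (k + 1)) *
          cbinom (x - 1) (y + ((k + 1 : ℤ) : ℂ) - 1) ^ w * H1 c (k + 1 - a)) -
      (x ^ w * (-1 : ℂ) ^ ((w : ℤ) * k) *
          cbinom (x - 1) (y + (k : ℂ) - 1) ^ w * H1 c (k - a)) := by
    intro k hak hkb
    have h2k1 := h2 (k + 1) (by omega) (by omega)
    have h1k := h1 k (by omega) (by omega)
    have h1k' := h1 (k - 1) (by omega) (by omega)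
    have h2k := h2 k (by omega) (by omega)
    have hxv : x - (y + (k : ℂ)) ≠ 0 := fun h => (h2k1 0) (by push_cast; linear_combination h)
    have hgA1 : Complex.Gamma ((y + (k : ℂ)) + 1) ≠ 0 := Complex.Gamma_ne_zero h1k
    have hgA2 : Complex.Gamma (x - (y + (k : ℂ))) ≠ 0 := by
      rw [show x - (y + (k : ℂ)) = x - y - (((k + 1 : ℤ)) : ℂ) + 1 by push_cast; ring]
      exact Complex.Gamma_ne_zero h2k1
    have hv : y + (k : ℂ) ≠ 0 := fun h => (h1k' 0) (by push_cast; linear_combination h)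
    have hgB1 : Complex.Gamma (y + (k : ℂ)) ≠ 0 := by
      rw [show y + (k : ℂ) = y + (((k - 1 : ℤ)) : ℂ) + 1 by push_cast; ring]
      exact Complex.Gamma_ne_zero h1k'
    have hgB2 : Complex.Gamma (x - (y + (k : ℂ)) + 1) ≠ 0 := by
      rw [show x - (y + (k : ℂ)) + 1 = x - y - (k : ℂ) + 1 by ring]
      exact Complex.Gamma_ne_zero h2k
    have eAraw := cbinom_keyA x (y + (k : ℂ)) hx0 hxv hgA1 hgA2
    have eBraw := cbinom_keyB x (y + (k : ℂ)) hx0 hv hgB1 hgB2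
    have eA : x ^ w * cbinom (x - 1) (y + (k : ℂ)) ^ w =
        (-1 : ℂ) ^ w * (y - x + (k : ℂ)) ^ w * cbinom x (y + (k : ℂ)) ^ w := by
      have h := congrArg (· ^ w) eAraw
      simp only [mul_pow] at h
      rw [show x - (y + (k : ℂ)) = -(y - x + (k : ℂ)) by ring, neg_pow] at h
      linear_combination h
    have eB : x ^ w * cbinom (x - 1) (y + (k : ℂ) - 1) ^ w =
        (y + (k : ℂ)) ^ w * cbinom x (y + (k : ℂ)) ^ w := by
      have h := congrArg (· ^ w) eBraw
      simp only [mul_pow] at h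
      linear_combination h
    have hsign : (-1 : ℂ) ^ ((w : ℤ) * (k + 1)) =
        (-1 : ℂ) ^ ((w : ℤ) * k) * (-1 : ℂ) ^ w := by
      rw [mul_add, mul_one, zpow_add₀ (by norm_num : (-1 : ℂ) ≠ 0), zpow_natCast]
    rw [show ((k + 1 : ℤ) : ℂ) = (k : ℂ) + 1 by push_cast; ring,
      show y + ((k : ℂ) + 1) - 1 = y + (k : ℂ) by ring,
      show k + 1 - a = k - a + 1 by ring, hsign]
    linear_combination
      (-( (-1 : ℂ) ^ ((w : ℤ) * k) * (-1 : ℂ) ^ w * H1 c (k - a + 1))) * eA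
      - ((-1 : ℂ) ^ ((w : ℤ) * k) * H1 c (k - a + 1) * (y - x + (k : ℂ)) ^ w *
          cbinom x (y + (k : ℂ)) ^ w) * EE
      + ((-1 : ℂ) ^ ((w : ℤ) * k) * H1 c (k - a)) * eB
  have tele : ∀ n : ℤ, a ≤ n → n ≤ b →
      (∑ k ∈ Finset.Ico a n,
        (((y - x + (k : ℂ)) ^ w * H1 c (k - a + 1) -
          (y + (k : ℂ)) ^ w * H1 c (k - a)) *
          ((-1 : ℂ) ^ ((w : ℤ) * k) * cbinom x (y + (k : ℂ)) ^ w))) =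
      x ^ w * (-1 : ℂ) ^ ((w : ℤ) * n) * cbinom (x - 1) (y + (n : ℂ) - 1) ^ w *
        H1 c (n - a) := by
    intro n han
    refine Int.le_induction (motive := fun n _ => n ≤ b →
      (∑ k ∈ Finset.Ico a n,
        (((y - x + (k : ℂ)) ^ w * H1 c (k - a + 1) -
          (y + (k : ℂ)) ^ w * H1 c (k - a)) *
          ((-1 : ℂ) ^ ((w : ℤ) * k) * cbinom x (y + (k : ℂ)) ^ w))) =
      x ^ w * (-1 : ℂ) ^ ((w : ℤ) * n) * cbinom (x - 1) (y + (n : ℂ) - 1) ^ w *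
        H1 c (n - a)) ?_ ?_ n han
    · intro _
      rw [Finset.Ico_self, Finset.sum_empty, sub_self]
      simp [H1]
    · intro n hn ih hnb
      have hsplit : Finset.Ico a (n + 1) = insert n (Finset.Ico a n) := by
        ext m; simp only [Finset.mem_Ico, Finset.mem_insert]; omega
      rw [hsplit, Finset.sum_insert (by simp), ih (by omega), step n hn (by omega)]
      ring
  exact tele b hab le_rfl
end

section
/- Let a ≤ b be integers, let w be a positive integer, and let x, y be complex numbers such that x is not a nonpositive integer, none of the complex numbers y+k+1 and x−y−k+1 (for a−1 ≤ k ≤ b) is a nonpositive integer, and −y−b+i ≠ 0 for all integers 1 ≤ i ≤ b−a. Then Σ_{k=a}^{b−1} [ (y−x+k)^w · H1(−y−b, b−k−1) − (y+k)^w · H1(−y−b, b−k) ] · (−1)^{wk} · binom(x, y+k)^w = −x^w · (−1)^{wa} · binom(x−1, y+a−1)^w · H1(−y−b, b−a). -/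
open Finset

private lemma telescope_Ico (F : ℤ → ℂ) (a : ℤ) : ∀ (b : ℤ), a ≤ b →
    ∑ k ∈ Finset.Ico a b, (F (k+1) - F k) = F b - F a := by
  refine Int.le_induction ?_ ?_
  · simp
  · intro b hab ih
    rw [show Finset.Ico a (b+1) = insert b (Finset.Ico a b) by
      ext t; simp only [Finset.mem_Ico, Finset.mem_insert]; omega,
      Finset.sum_insert (by simp), ih]
    ring

theorem harmonic_identity_2b (a b : ℤ) (hab : a ≤ b) (w : ℕ) (hw : 0 < w) (x y : ℂ)
    (hx : ∀ m : ℕ, x ≠ -(m : ℂ))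
    (h1 : ∀ k : ℤ, a - 1 ≤ k → k ≤ b → ∀ m : ℕ, y + (k : ℂ) + 1 ≠ -(m : ℂ))
    (h2 : ∀ k : ℤ, a - 1 ≤ k → k ≤ b → ∀ m : ℕ, x - y - (k : ℂ) + 1 ≠ -(m : ℂ))
    (hh : ∀ i : ℤ, 1 ≤ i → i ≤ b - a → -y - (b : ℂ) + (i : ℂ) ≠ 0) :
    ∑ k ∈ Finset.Ico a b,
        (((y - x + (k : ℂ)) ^ w * H1 (-y - (b : ℂ)) (b - k - 1) -
          (y + (k : ℂ)) ^ w * H1 (-y - (b : ℂ)) (b - k)) *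
          ((-1 : ℂ) ^ ((w : ℤ) * k) * cbinom x (y + (k : ℂ)) ^ w)) =
    -(x ^ w * (-1 : ℂ) ^ ((w : ℤ) * a) * cbinom (x - 1) (y + (a : ℂ) - 1) ^ w *
      H1 (-y - (b : ℂ)) (b - a)) := by
  set c : ℂ := -y - b with hc
  set F : ℤ → ℂ := fun k =>
    x ^ w * (-1 : ℂ) ^ ((w : ℤ) * k) * cbinom (x - 1) (y + (k : ℂ) - 1) ^ w * H1 c (b - k)
    with hF
  have hx0 : x ≠ 0 := by simpa using hx 0
  have hGx : Complex.Gamma (x + 1) ≠ 0 := by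
    apply Complex.Gamma_ne_zero
    intro m h
    exact hx (m + 1) (by push_cast; linear_combination h)
  have key : ∀ k ∈ Finset.Ico a b,
      (((y - x + (k : ℂ)) ^ w * H1 c (b - k - 1) -
        (y + (k : ℂ)) ^ w * H1 c (b - k)) *
        ((-1 : ℂ) ^ ((w : ℤ) * k) * cbinom x (y + (k : ℂ)) ^ w)) = F (k+1) - F k := by
    intro k hk
    rw [Finset.mem_Ico] at hk
    obtain ⟨hak, hkb⟩ := hk
    have hyk : y + (k : ℂ) ≠ 0 := by
      have h := h1 (k-1) (by omega) (by omega) 0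
      push_cast at h
      intro hz; apply h; rw [show y + ((k : ℂ) - 1) + 1 = y + k by ring, hz]; norm_num
    have hxyk : x - y - (k : ℂ) ≠ 0 := by
      have h := h2 (k+1) (by omega) (by omega) 0
      push_cast at h
      intro hz; apply h; rw [show x - y - ((k : ℂ) + 1) + 1 = x - y - k by ring, hz]; norm_num
    have hG1 : Complex.Gamma (y + (k : ℂ) + 1) ≠ 0 :=
      Complex.Gamma_ne_zero (h1 k (by omega) (by omega))
    have hG2 : Complex.Gamma (x - y - (k : ℂ) + 1) ≠ 0 :=
      Complex.Gamma_ne_zero (h2 k (by omega) (by omega))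
    have hrG1 : Complex.Gamma (y + (k : ℂ) + 1) = (y + k) * Complex.Gamma (y + k) :=
      Complex.Gamma_add_one _ hyk
    have hrG2 : Complex.Gamma (x - y - (k : ℂ) + 1) = (x - y - k) * Complex.Gamma (x - y - k) :=
      Complex.Gamma_add_one _ hxyk
    have hG3 : Complex.Gamma (y + (k : ℂ)) ≠ 0 := by
      intro hz; rw [hrG1, hz, mul_zero] at hG1; exact hG1 rfl
    have hG4 : Complex.Gamma (x - y - (k : ℂ)) ≠ 0 := by
      intro hz; rw [hrG2, hz, mul_zero] at hG2; exact hG2 rfl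
    have hrGx : Complex.Gamma (x + 1) = x * Complex.Gamma x := Complex.Gamma_add_one _ hx0
    have hGx0 : Complex.Gamma x ≠ 0 := by
      intro hz; rw [hrGx, hz, mul_zero] at hGx; exact hGx rfl
    -- Gamma-recurrence identities for the binomials
    have hA : x * cbinom (x - 1) (y + (k : ℂ)) = (x - y - k) * cbinom x (y + (k : ℂ)) := by
      unfold cbinom
      rw [show x - 1 + 1 = x by ring, show x - 1 - (y + (k:ℂ)) + 1 = x - y - k by ring,
        show x - (y + (k:ℂ)) + 1 = x - y - k + 1 by ring, hrGx, hrG2]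
      field_simp
    have hB : x * cbinom (x - 1) (y + (k : ℂ) - 1) = (y + k) * cbinom x (y + (k : ℂ)) := by
      unfold cbinom
      rw [show x - 1 + 1 = x by ring, show y + (k:ℂ) - 1 + 1 = y + k by ring,
        show x - 1 - (y + (k:ℂ) - 1) + 1 = x - y - k + 1 by ring,
        show x - (y + (k:ℂ)) + 1 = x - y - k + 1 by ring, hrGx, hrG1]
      field_simp
    have e1 : x ^ w * cbinom (x - 1) (y + (k : ℂ)) ^ w
        = (x - y - k) ^ w * cbinom x (y + (k : ℂ)) ^ w := by
      rw [← mul_pow, hA, mul_pow]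
    have e2 : x ^ w * cbinom (x - 1) (y + (k : ℂ) - 1) ^ w
        = (y + (k : ℂ)) ^ w * cbinom x (y + (k : ℂ)) ^ w := by
      rw [← mul_pow, hB, mul_pow]
    have e3 : (y - x + (k : ℂ)) ^ w = (-1 : ℂ) ^ w * (x - y - k) ^ w := by
      rw [← neg_pow, show -(x - y - (k:ℂ)) = y - x + k by ring]
    have s1 : ((-1 : ℂ)) ^ ((w : ℤ) * (k + 1))
        = (-1 : ℂ) ^ ((w : ℤ) * k) * (-1 : ℂ) ^ w := by
      rw [show (w : ℤ) * (k + 1) = (w : ℤ) * k + (w : ℤ) by ring,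
        zpow_add₀ (by norm_num : (-1 : ℂ) ≠ 0), zpow_natCast]
    simp only [hF]
    push_cast
    rw [show y + ((k : ℂ) + 1) - 1 = y + k by ring,
      show b - (k + 1) = b - k - 1 by ring, s1]
    set t := (-1 : ℂ) ^ ((w : ℤ) * k)
    set B := cbinom x (y + (k : ℂ)) ^ w
    set H' := H1 c (b - k - 1)
    set H'' := H1 c (b - k)
    linear_combination (t * B * H') * e3 - ((-1 : ℂ) ^ w * t * H') * e1 + (t * H'') * e2
  rw [Finset.sum_congr rfl key, telescope_Ico F a b hab]
  have hFb : F b = 0 := by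
    simp [hF, H1, show b - b = (0:ℤ) by ring]
  rw [hFb]
  simp only [hF]
  ring
end

section
/- Let a ≤ b be integers, let w be a positive integer, and let x, y be complex numbers such that x+1 is not a nonpositive integer, none of the complex numbers y+k+1 and x−y−k+1 (for a ≤ k ≤ b) is a nonpositive integer, and y+a+i ≠ 0 for all integers 1 ≤ i ≤ b−a. Then Σ_{k=a}^{b−1} [ (−y−k−1)^w · H1(y+a, k−a+1) − (x−y−k+1)^w · H1(y+a, k−a) ] · (−1)^{wk} · binom(x, y+k)^{−w} = (x+1)^w · (−1)^{wb} · binom(x+1, y+b)^{−w} · H1(y+a, b−a). -/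
open Finset

lemma step_key (w : ℕ) (x y c : ℂ) (b a : ℤ)
    (hx : ∀ m : ℕ, x + 1 ≠ -(m : ℂ))
    (h1 : ∀ m : ℕ, y + (b : ℂ) + 1 ≠ -(m : ℂ))
    (h2 : ∀ m : ℕ, x - y - (b : ℂ) + 1 ≠ -(m : ℂ)) :
    (((-y - (b : ℂ) - 1) ^ w * H1 c (b - a + 1) -
        (x - y - (b : ℂ) + 1) ^ w * H1 c (b - a)) *
        ((-1 : ℂ) ^ ((w : ℤ) * b) * cbinom x (y + (b : ℂ)) ^ (-(w : ℤ)))) =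
    (x + 1) ^ w * (-1 : ℂ) ^ ((w : ℤ) * (b + 1)) *
        cbinom (x + 1) (y + (b : ℂ) + 1) ^ (-(w : ℤ)) * H1 c (b - a + 1) -
    (x + 1) ^ w * (-1 : ℂ) ^ ((w : ℤ) * b) *
        cbinom (x + 1) (y + (b : ℂ)) ^ (-(w : ℤ)) * H1 c (b - a) := by
  have hx0 : x + 1 ≠ 0 := by simpa using hx 0
  have hy0 : y + (b : ℂ) + 1 ≠ 0 := by simpa using h1 0
  have hz0 : x - y - (b : ℂ) + 1 ≠ 0 := by simpa using h2 0
  have hGx : Complex.Gamma (x + 1) ≠ 0 := Complex.Gamma_ne_zero hx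
  have hGy : Complex.Gamma (y + (b : ℂ) + 1) ≠ 0 := Complex.Gamma_ne_zero h1
  have hGz : Complex.Gamma (x - y - (b : ℂ) + 1) ≠ 0 := Complex.Gamma_ne_zero h2
  have e1 : Complex.Gamma (x + 1 + 1) = (x + 1) * Complex.Gamma (x + 1) :=
    Complex.Gamma_add_one _ hx0
  have e2 : Complex.Gamma (y + (b : ℂ) + 1 + 1) =
      (y + (b : ℂ) + 1) * Complex.Gamma (y + (b : ℂ) + 1) :=
    Complex.Gamma_add_one _ hy0
  have e3 : Complex.Gamma (x - y - (b : ℂ) + 1 + 1) =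
      (x - y - (b : ℂ) + 1) * Complex.Gamma (x - y - (b : ℂ) + 1) :=
    Complex.Gamma_add_one _ hz0
  have c1 : cbinom x (y + (b : ℂ)) =
      Complex.Gamma (x + 1) /
        (Complex.Gamma (y + (b : ℂ) + 1) * Complex.Gamma (x - y - (b : ℂ) + 1)) := by
    simp only [cbinom]
    ring_nf
  have c2 : cbinom (x + 1) (y + (b : ℂ)) =
      ((x + 1) * Complex.Gamma (x + 1)) /
        (Complex.Gamma (y + (b : ℂ) + 1) *
          ((x - y - (b : ℂ) + 1) * Complex.Gamma (x - y - (b : ℂ) + 1))) := by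
    simp only [cbinom]
    rw [show x + 1 - (y + (b : ℂ)) + 1 = x - y - (b : ℂ) + 1 + 1 by ring, e3,
      show x + 1 + 1 = x + 1 + 1 from rfl, e1]
  have c3 : cbinom (x + 1) (y + (b : ℂ) + 1) =
      ((x + 1) * Complex.Gamma (x + 1)) /
        (((y + (b : ℂ) + 1) * Complex.Gamma (y + (b : ℂ) + 1)) *
          Complex.Gamma (x - y - (b : ℂ) + 1)) := by
    simp only [cbinom]
    rw [show x + 1 - (y + (b : ℂ) + 1) + 1 = x - y - (b : ℂ) + 1 by ring, e2, e1]
  have hs : (-1 : ℂ) ^ ((w : ℤ) * (b + 1)) =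
      (-1 : ℂ) ^ ((w : ℤ) * b) * (-1 : ℂ) ^ w := by
    rw [mul_add, mul_one, zpow_add₀ (by norm_num : (-1 : ℂ) ≠ 0), zpow_natCast]
  rw [c1, c2, c3, hs, show (-y - (b : ℂ) - 1) = -(y + (b : ℂ) + 1) by ring, neg_pow]
  simp only [zpow_neg, zpow_natCast, div_pow, mul_pow]
  field_simp

theorem harmonic_identity_3a (a b : ℤ) (hab : a ≤ b) (w : ℕ) (hw : 0 < w) (x y : ℂ)
    (hx : ∀ m : ℕ, x + 1 ≠ -(m : ℂ))
    (h1 : ∀ k : ℤ, a ≤ k → k ≤ b → ∀ m : ℕ, y + (k : ℂ) + 1 ≠ -(m : ℂ))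
    (h2 : ∀ k : ℤ, a ≤ k → k ≤ b → ∀ m : ℕ, x - y - (k : ℂ) + 1 ≠ -(m : ℂ))
    (hh : ∀ i : ℤ, 1 ≤ i → i ≤ b - a → y + (a : ℂ) + (i : ℂ) ≠ 0) :
    ∑ k ∈ Finset.Ico a b,
        (((-y - (k : ℂ) - 1) ^ w * H1 (y + (a : ℂ)) (k - a + 1) -
          (x - y - (k : ℂ) + 1) ^ w * H1 (y + (a : ℂ)) (k - a)) *
          ((-1 : ℂ) ^ ((w : ℤ) * k) * cbinom x (y + (k : ℂ)) ^ (-(w : ℤ)))) =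
    (x + 1) ^ w * (-1 : ℂ) ^ ((w : ℤ) * b) * cbinom (x + 1) (y + (b : ℂ)) ^ (-(w : ℤ)) *
      H1 (y + (a : ℂ)) (b - a) := by
  clear hh
  revert h1 h2
  refine Int.le_induction (motive := fun b _ =>
    (∀ k : ℤ, a ≤ k → k ≤ b → ∀ m : ℕ, y + (k : ℂ) + 1 ≠ -(m : ℂ)) →
    (∀ k : ℤ, a ≤ k → k ≤ b → ∀ m : ℕ, x - y - (k : ℂ) + 1 ≠ -(m : ℂ)) →
    ∑ k ∈ Finset.Ico a b,
        (((-y - (k : ℂ) - 1) ^ w * H1 (y + (a : ℂ)) (k - a + 1) -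
          (x - y - (k : ℂ) + 1) ^ w * H1 (y + (a : ℂ)) (k - a)) *
          ((-1 : ℂ) ^ ((w : ℤ) * k) * cbinom x (y + (k : ℂ)) ^ (-(w : ℤ)))) =
    (x + 1) ^ w * (-1 : ℂ) ^ ((w : ℤ) * b) * cbinom (x + 1) (y + (b : ℂ)) ^ (-(w : ℤ)) *
      H1 (y + (a : ℂ)) (b - a)) ?_ ?_ b hab
  · intro _ _
    simp [H1]
  · intro b hb ih h1 h2
    replace ih := ih (fun k hk1 hk2 m => h1 k hk1 (by omega) m)
      (fun k hk1 hk2 m => h2 k hk1 (by omega) m)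
    have hsplit : Finset.Ico a (b + 1) = insert b (Finset.Ico a b) := by
      ext k
      simp only [Finset.mem_Ico, Finset.mem_insert]
      omega
    rw [hsplit, Finset.sum_insert (by simp), ih,
      step_key w x y (y + (a : ℂ)) b a hx (h1 b hb (by omega)) (h2 b hb (by omega))]
    push_cast
    rw [show b + 1 - a = b - a + 1 by ring]
    ring
end

section
/- Let n be a nonnegative integer and let m be a complex number that is not a negative integer. Then Σ_{k=0}^{n} binom(k, m) · H_k = binom(n+1, m+1) · ( H_{n+1} − 1/(m+1) ) + binom(0, m+1)/(m+1). -/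
open Finset

lemma gamma_nat_ne (k : ℕ) : Complex.Gamma ((k : ℂ) + 1) ≠ 0 := by
  rw [Complex.Gamma_nat_eq_factorial]
  exact_mod_cast Nat.factorial_ne_zero k

lemma gamma_shift_ne (m : ℂ) (hm : ∀ j : ℕ, m ≠ -((j : ℂ) + 1)) :
    Complex.Gamma (m + 1) ≠ 0 := by
  apply Complex.Gamma_ne_zero
  intro j h
  exact hm j (by linear_combination h)

lemma step_lemma (n : ℕ) (m : ℂ) (hm : ∀ j : ℕ, m ≠ -((j : ℂ) + 1)) :
    cbinom ((n : ℂ) + 1) m * (harmonic (n + 1) : ℂ) +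
      cbinom ((n : ℂ) + 1) (m + 1) * ((harmonic (n + 1) : ℂ) - 1 / (m + 1)) =
    cbinom ((n : ℂ) + 1 + 1) (m + 1) * ((harmonic (n + 2) : ℂ) - 1 / (m + 1)) := by
  have hm1 : m + 1 ≠ 0 := by
    intro h; exact hm 0 (by push_cast; linear_combination h)
  have hg1 : Complex.Gamma (m + 1) ≠ 0 := gamma_shift_ne m hm
  have hn2 : ((n : ℂ) + 2) ≠ 0 := by
    have : ((n + 2 : ℕ) : ℂ) ≠ 0 := Nat.cast_ne_zero.mpr (by omega)
    push_cast at this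
    exact this
  have hA : Complex.Gamma ((n : ℂ) + 1 + 1) ≠ 0 := by
    have := gamma_nat_ne (n + 1)
    push_cast at this
    exact this
  have hH : (harmonic (n + 2) : ℂ) = (harmonic (n + 1) : ℂ) + 1 / ((n : ℂ) + 2) := by
    rw [harmonic_succ (n + 1)]
    push_cast
    ring
  have hGm2 : Complex.Gamma (m + 1 + 1) = (m + 1) * Complex.Gamma (m + 1) :=
    Complex.Gamma_add_one _ hm1
  have hGn3 : Complex.Gamma ((n : ℂ) + 1 + 1 + 1) =
      ((n : ℂ) + 2) * Complex.Gamma ((n : ℂ) + 1 + 1) := by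
    rw [Complex.Gamma_add_one ((n : ℂ) + 1 + 1)
      (by rw [show (n : ℂ) + 1 + 1 = (n : ℂ) + 2 by ring]; exact hn2)]
    ring
  have hA3 : Complex.Gamma ((n : ℂ) + 1 + 1 + 1) ≠ 0 :=
    hGn3 ▸ mul_ne_zero hn2 hA
  unfold cbinom
  rw [hH]
  by_cases hc : (n : ℂ) + 1 - m = 0
  · -- m = n + 1
    have hmval : m = (n : ℂ) + 1 := by linear_combination -hc
    subst hmval
    rw [show (n : ℂ) + 1 - ((n : ℂ) + 1) + 1 = 1 by ring,
      show (n : ℂ) + 1 + 1 - ((n : ℂ) + 1 + 1) + 1 = 1 by ring,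
      show (n : ℂ) + 1 - ((n : ℂ) + 1 + 1) + 1 = 0 by ring,
      Complex.Gamma_one, Complex.Gamma_zero]
    rw [mul_zero, div_zero, zero_mul, add_zero, mul_one, mul_one,
      div_self hA, div_self hA3, one_mul, one_mul]
    have hn1 : ((n : ℂ) + 1) ≠ 0 := by
      have : ((n + 1 : ℕ) : ℂ) ≠ 0 := Nat.cast_ne_zero.mpr (by omega)
      push_cast at this
      exact this
    field_simp
    ring
  · have hGD : Complex.Gamma ((n : ℂ) + 1 - m + 1) =
        ((n : ℂ) + 1 - m) * Complex.Gamma ((n : ℂ) + 1 - m) :=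
      Complex.Gamma_add_one _ hc
    have e4 : (n : ℂ) + 1 + 1 - (m + 1) + 1 = ((n : ℂ) + 1 - m) + 1 := by ring
    have e5 : (n : ℂ) + 1 - (m + 1) + 1 = (n : ℂ) + 1 - m := by ring
    rw [e4, e5, hGD, hGm2, hGn3]
    by_cases hD : Complex.Gamma ((n : ℂ) + 1 - m) = 0
    · rw [hD]
      simp only [mul_zero, zero_mul, div_zero, add_zero]
    · set A := Complex.Gamma ((n : ℂ) + 1 + 1) with hAdef
      set g := Complex.Gamma (m + 1) with hgdef
      set D := Complex.Gamma ((n : ℂ) + 1 - m) with hDdef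
      set H := (harmonic (n + 1) : ℂ) with hHdef
      have hd1 : g * (((n : ℂ) + 1 - m) * D) ≠ 0 :=
        mul_ne_zero hg1 (mul_ne_zero hc hD)
      have hd2 : (m + 1) * g * D * (m + 1) ≠ 0 :=
        mul_ne_zero (mul_ne_zero (mul_ne_zero hm1 hg1) hD) hm1
      have hd3 : (m + 1) * g * (((n : ℂ) + 1 - m) * D) * ((m + 1) * ((n : ℂ) + 2)) ≠ 0 :=
        mul_ne_zero (mul_ne_zero (mul_ne_zero hm1 hg1) (mul_ne_zero hc hD))
          (mul_ne_zero hm1 hn2)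
      have h1 : H - 1 / (m + 1) = (H * (m + 1) - 1) / (m + 1) := by
        field_simp
      have h2 : H + 1 / ((n : ℂ) + 2) - 1 / (m + 1) =
          (H * (m + 1) * ((n : ℂ) + 2) + (m + 1) - ((n : ℂ) + 2)) / ((m + 1) * ((n : ℂ) + 2)) := by
        field_simp
      rw [h1, h2, div_mul_eq_mul_div, div_mul_div_comm, div_mul_div_comm,
        div_add_div _ _ hd1 hd2, div_eq_div_iff (mul_ne_zero hd1 hd2) hd3]
      ring

theorem harmonic_choose_identity (n : ℕ) (m : ℂ) (hm : ∀ j : ℕ, m ≠ -((j : ℂ) + 1)) :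
    ∑ k ∈ Finset.range (n + 1), cbinom (k : ℂ) m * (harmonic k : ℂ) =
    cbinom ((n : ℂ) + 1) (m + 1) * ((harmonic (n + 1) : ℂ) - 1 / (m + 1)) +
      cbinom 0 (m + 1) / (m + 1) := by
  have hm1 : m + 1 ≠ 0 := by
    intro h; exact hm 0 (by push_cast; linear_combination h)
  have hg2 : Complex.Gamma (m + 1 + 1) ≠ 0 := by
    apply gamma_shift_ne
    intro j h
    exact hm (j + 1) (by push_cast; linear_combination h)
  induction n with
  | zero =>
    have hH1 : (harmonic (0 + 1) : ℂ) = 1 := by norm_num [harmonic_succ]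
    rw [Finset.sum_range_one, hH1]
    simp only [Nat.cast_zero, harmonic_zero, Rat.cast_zero, mul_zero]
    unfold cbinom
    rw [show (0 : ℂ) + 1 + 1 = ((1 : ℕ) : ℂ) + 1 by norm_num,
      Complex.Gamma_nat_eq_factorial,
      show (0 : ℂ) + 1 - (m + 1) + 1 = -m + 1 by ring,
      show (0 : ℂ) - (m + 1) + 1 = -m by ring,
      show (0 : ℂ) + 1 = 1 by ring, Complex.Gamma_one]
    norm_num
    by_cases hm0 : m = 0
    · subst hm0
      norm_num [Complex.Gamma_zero]
    · rw [Complex.Gamma_add_one (-m) (neg_ne_zero.mpr hm0)]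
      by_cases hG : Complex.Gamma (-m) = 0
      · rw [hG]
        norm_num
      · field_simp
        ring
  | succ n ih =>
    rw [Finset.sum_range_succ, ih]
    simp only [show n + 1 + 1 = n + 2 from rfl]
    push_cast
    linear_combination step_lemma n m hm
end

section
/- Let n be a nonnegative integer and let m be a complex number that is not a negative integer and satisfies m ≠ n+1. Then Σ_{k=0}^{n} binom(m, n−k) · binom(n, k)^{−1} · H_k = (n+1)/(n−m+1) · [ H_{n+1} + (binom(m, n+1) − 1)/(n−m+1) ]. -/
open Finset

lemma Ginv_eq (z : ℂ) : (Complex.Gamma z)⁻¹ = z * (Complex.Gamma (z+1))⁻¹ := by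
  by_cases hz : z = 0
  · simp [hz, Complex.Gamma_zero]
  · rw [Complex.Gamma_add_one z hz]
    by_cases hG : Complex.Gamma z = 0
    · simp [hG]
    · field_simp

lemma harm_succ (N : ℕ) : (harmonic (N+1) : ℂ) = (harmonic N : ℂ) + ((N:ℂ)+1)⁻¹ := by
  rw [harmonic_succ]; push_cast; ring

lemma key (c : ℂ) : ∀ N : ℕ,
    (1-c)^2 * ∑ k ∈ range N,
      (k.factorial : ℂ) * (Complex.Gamma ((k:ℂ)+c+1))⁻¹ * (harmonic k : ℂ) =
    (1-c) * (N.factorial : ℂ) * (Complex.Gamma ((N:ℂ)+c))⁻¹ * (harmonic N : ℂ) -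
      ((N.factorial : ℂ) * (Complex.Gamma ((N:ℂ)+c))⁻¹ - (Complex.Gamma c)⁻¹) := by
  intro N
  induction N with
  | zero => simp
  | succ N IH =>
      rw [sum_range_succ, mul_add, IH, harm_succ]
      have h1 : ((N:ℂ)+1) * ((N:ℂ)+1)⁻¹ = 1 :=
        mul_inv_cancel₀ (Nat.cast_add_one_ne_zero N)
      have h2 : (Complex.Gamma ((N:ℂ)+c))⁻¹ = ((N:ℂ)+c) * (Complex.Gamma ((N:ℂ)+c+1))⁻¹ :=
        Ginv_eq ((N:ℂ)+c)
      have h3 : ((N+1:ℕ):ℂ) + c = (N:ℂ) + c + 1 := by push_cast; ring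
      have h4 : ((N+1:ℕ).factorial : ℂ) = ((N:ℂ)+1) * (N.factorial : ℂ) := by
        push_cast [Nat.factorial_succ]; ring
      rw [h2, h3, h4]
      linear_combination ((c-1) * (N.factorial:ℂ) * (Complex.Gamma ((N:ℂ)+c+1))⁻¹) * h1

set_option maxHeartbeats 2000000 in
theorem harmonic_choose_ratio_identity (n : ℕ) (m : ℂ)
    (hm : ∀ j : ℕ, m ≠ -((j : ℂ) + 1)) (hm' : m ≠ (n : ℂ) + 1) :
    ∑ k ∈ Finset.range (n + 1),
        cbinom m ((n : ℂ) - (k : ℂ)) * (cbinom (n : ℂ) (k : ℂ))⁻¹ * (harmonic k : ℂ) =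
    ((n : ℂ) + 1) / ((n : ℂ) - m + 1) *
      ((harmonic (n + 1) : ℂ) + (cbinom m ((n : ℂ) + 1) - 1) / ((n : ℂ) - m + 1)) := by
  set c : ℂ := m - (n : ℂ) with hc
  -- nonvanishing facts
  have hΓm : Complex.Gamma (m + 1) ≠ 0 := by
    apply Complex.Gamma_ne_zero
    intro j h
    exact hm j (by linear_combination h)
  have hd : (n : ℂ) - m + 1 ≠ 0 := by
    intro h
    exact hm' (by linear_combination -h)
  -- rewrite each summand
  have hsum : ∀ k ∈ range (n+1),
      cbinom m ((n : ℂ) - (k : ℂ)) * (cbinom (n : ℂ) (k : ℂ))⁻¹ * (harmonic k : ℂ) =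
      Complex.Gamma (m+1) * ((n.factorial : ℂ))⁻¹ *
        ((k.factorial : ℂ) * (Complex.Gamma ((k:ℂ)+c+1))⁻¹ * (harmonic k : ℂ)) := by
    intro k hk
    have hkn : k ≤ n := Nat.lt_succ_iff.mp (mem_range.mp hk)
    have e1 : (n : ℂ) - (k : ℂ) + 1 = ((n - k : ℕ) : ℂ) + 1 := by
      push_cast [Nat.cast_sub hkn]; ring
    have e2 : m - ((n : ℂ) - (k : ℂ)) + 1 = (k:ℂ) + c + 1 := by rw [hc]; ring
    have e3 : (n : ℂ) - (k : ℂ) + 1 = ((n - k : ℕ) : ℂ) + 1 := e1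
    have hb : (((n-k).factorial : ℂ)) ≠ 0 := by exact_mod_cast (n-k).factorial_ne_zero
    have hkf : ((k.factorial : ℂ)) ≠ 0 := by exact_mod_cast k.factorial_ne_zero
    have hnf : ((n.factorial : ℂ)) ≠ 0 := by exact_mod_cast n.factorial_ne_zero
    have c1 : cbinom m ((n : ℂ) - (k : ℂ)) =
        Complex.Gamma (m+1) * (((n-k).factorial : ℂ))⁻¹ * (Complex.Gamma ((k:ℂ)+c+1))⁻¹ := by
      rw [cbinom, e1, e2, Complex.Gamma_nat_eq_factorial, div_eq_mul_inv, mul_inv]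
      ring
    have c2 : (cbinom (n : ℂ) (k : ℂ))⁻¹ =
        (k.factorial : ℂ) * (((n-k).factorial : ℂ)) * ((n.factorial : ℂ))⁻¹ := by
      rw [cbinom, e3]
      rw [show (n:ℂ) + 1 = ((n:ℕ):ℂ) + 1 by norm_num,
          show (k:ℂ) + 1 = ((k:ℕ):ℂ) + 1 by norm_num]
      rw [Complex.Gamma_nat_eq_factorial, Complex.Gamma_nat_eq_factorial,
          Complex.Gamma_nat_eq_factorial]
      rw [inv_div, div_eq_mul_inv]
    rw [c1, c2]
    set g := (Complex.Gamma ((k:ℂ)+c+1))⁻¹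
    field_simp
  rw [Finset.sum_congr rfl hsum, ← Finset.mul_sum]
  have hkey := key c (n+1)
  have harg : ((n+1:ℕ):ℂ) + c = m + 1 := by rw [hc]; push_cast; ring
  rw [harg] at hkey
  -- expand cbinom m (n+1)
  have hcb : cbinom m ((n:ℂ)+1) =
      Complex.Gamma (m+1) * (((n+1).factorial : ℂ))⁻¹ * (Complex.Gamma c)⁻¹ := by
    rw [cbinom, show (n:ℂ)+1+1 = ((n+1:ℕ):ℂ)+1 by push_cast; ring,
        show m - ((n:ℂ)+1) + 1 = c by rw [hc]; ring,
        Complex.Gamma_nat_eq_factorial, div_eq_mul_inv, mul_inv]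
    ring
  rw [hcb]
  have hnf : ((n.factorial : ℂ)) ≠ 0 := by exact_mod_cast n.factorial_ne_zero
  have hn1f : (((n+1).factorial : ℂ)) ≠ 0 := by exact_mod_cast (n+1).factorial_ne_zero
  have hfs : (((n+1).factorial : ℂ)) = ((n:ℂ)+1) * (n.factorial : ℂ) := by
    push_cast [Nat.factorial_succ]; ring
  rw [hfs] at hkey ⊢
  have hn1 : ((n:ℂ)+1) ≠ 0 := Nat.cast_add_one_ne_zero n
  have he : 1 - c = (n:ℂ) - m + 1 := by rw [hc]; ring
  rw [he] at hkey
  have hd2 : ((n:ℂ)-m+1)^2 ≠ 0 := pow_ne_zero _ hd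
  have hGG : Complex.Gamma (m+1) * (Complex.Gamma (m+1))⁻¹ = 1 := mul_inv_cancel₀ hΓm
  set S := ∑ k ∈ range (n+1),
      (k.factorial : ℂ) * (Complex.Gamma ((k:ℂ)+c+1))⁻¹ * (harmonic k : ℂ) with hS
  set g := (Complex.Gamma c)⁻¹
  have hkey2 : ((n:ℂ)-m+1)^2 * Complex.Gamma (m+1) * S
      = ((n:ℂ)-m+1)*((n:ℂ)+1)*(n.factorial:ℂ)*(harmonic (n+1):ℂ)
        - ((n:ℂ)+1)*(n.factorial:ℂ) + Complex.Gamma (m+1) * g := by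
    linear_combination Complex.Gamma (m+1) * hkey +
      (((n:ℂ)-m+1)*((n:ℂ)+1)*(n.factorial:ℂ)*(harmonic (n+1):ℂ)
        - ((n:ℂ)+1)*(n.factorial:ℂ)) * hGG
  have hB : (n.factorial:ℂ) * ((n.factorial:ℂ))⁻¹ = 1 := mul_inv_cancel₀ hnf
  have hD : ((n:ℂ)-m+1) * ((n:ℂ)-m+1)⁻¹ = 1 := mul_inv_cancel₀ hd
  have hE : (((n:ℂ)+1) * (n.factorial:ℂ)) * (((n:ℂ)+1) * (n.factorial:ℂ))⁻¹ = 1 :=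
    mul_inv_cancel₀ (mul_ne_zero hn1 hnf)
  apply mul_left_cancel₀ (mul_ne_zero hd2 hnf)
  linear_combination ((n.factorial:ℂ) * ((n.factorial:ℂ))⁻¹) * hkey2 +
    (((n:ℂ)-m+1)*((n:ℂ)+1)*(n.factorial:ℂ)*(harmonic (n+1):ℂ)
      - ((n:ℂ)+1)*(n.factorial:ℂ) + Complex.Gamma (m+1) * g) * hB +
    (-(((n:ℂ)-m+1)*((n:ℂ)+1)*(n.factorial:ℂ)*(harmonic (n+1):ℂ))
      + ((n:ℂ)+1)*(n.factorial:ℂ)*(((n:ℂ)-m+1) * ((n:ℂ)-m+1)⁻¹ + 1)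
      - Complex.Gamma (m+1) * g * (((n:ℂ)-m+1) * ((n:ℂ)-m+1)⁻¹ + 1)) * hD +
    (-(Complex.Gamma (m+1) * g * (((n:ℂ)-m+1) * ((n:ℂ)-m+1)⁻¹)^2)) * hE
end

section
/- Let n be a nonnegative integer and let m be a complex number that is not an integer less than or equal to n. Then Σ_{k=0}^{n} (−1)^k · binom(m, k)^{−1} · H_k = (m+1)/(m+2) · [ (−1)^n · binom(m+1, n+1)^{−1} · ( H_{n+1} − 1/(m+2) ) − 1/(m+2) ]. -/
open Finset

theorem harmonic_inv_choose_identity (n : ℕ) (m : ℂ)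
    (hm : ∀ j : ℤ, j ≤ (n : ℤ) → m ≠ (j : ℂ)) :
    ∑ k ∈ Finset.range (n + 1),
        (-1 : ℂ) ^ k * (cbinom m (k : ℂ))⁻¹ * (harmonic k : ℂ) =
    (m + 1) / (m + 2) *
      ((-1 : ℂ) ^ n * (cbinom (m + 1) ((n : ℂ) + 1))⁻¹ *
          ((harmonic (n + 1) : ℂ) - 1 / (m + 2)) - 1 / (m + 2)) := by
  induction n with
  | zero =>
    have h1 : m + 1 ≠ 0 := by
      have := hm (-1) (by omega)
      intro h; apply this; push_cast; linear_combination h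
    have h2 : m + 2 ≠ 0 := by
      have := hm (-2) (by omega)
      intro h; apply this; push_cast; linear_combination h
    have hG : Complex.Gamma (m + 1) ≠ 0 := by
      apply Complex.Gamma_ne_zero
      intro k h
      exact hm (-(k : ℤ) - 1) (by omega) (by push_cast; linear_combination h)
    have hc : (cbinom (m + 1) (((0 : ℕ) : ℂ) + 1))⁻¹ = (m + 1)⁻¹ := by
      unfold cbinom
      rw [show ((0:ℕ):ℂ) + 1 + 1 = (1:ℂ) + 1 from by norm_num,
        show m + 1 - (((0:ℕ):ℂ) + 1) + 1 = m + 1 from by push_cast; ring,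
        Complex.Gamma_add_one (m + 1) h1, Complex.Gamma_add_one 1 one_ne_zero,
        Complex.Gamma_one]
      rw [inv_div]
      field_simp
    rw [Finset.sum_range_one, hc,
      show ((harmonic 0 : ℚ) : ℂ) = 0 from by norm_num,
      show ((harmonic (0 + 1) : ℚ) : ℂ) = 1 from by norm_num [harmonic_succ]]
    rw [mul_zero]
    linear_combination (-(m+2)⁻¹*(1-(m+2)⁻¹)) * mul_inv_cancel₀ h1
      + ((m+2)⁻¹) * mul_inv_cancel₀ h2
  | succ n ih =>
    have hne : ∀ j : ℤ, j ≤ (n : ℤ) + 1 → m ≠ (j : ℂ) := by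
      intro j hj; exact hm j (by push_cast; omega)
    have h1 : m + 1 ≠ 0 := by
      have := hne (-1) (by omega)
      intro h; apply this; push_cast; linear_combination h
    have h2 : m + 2 ≠ 0 := by
      have := hne (-2) (by omega)
      intro h; apply this; push_cast; linear_combination h
    have hmn : m - n ≠ 0 := by
      have := hne (n : ℤ) (by omega)
      intro h; apply this; push_cast; linear_combination h
    have hG : Complex.Gamma (m + 1) ≠ 0 := by
      apply Complex.Gamma_ne_zero
      intro k h
      exact hne (-(k : ℤ) - 1) (by omega) (by push_cast; linear_combination h)
    have hn2 : (n : ℂ) + 2 ≠ 0 := by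
      have : ((n + 2 : ℕ) : ℂ) ≠ 0 := Nat.cast_ne_zero.mpr (by omega)
      intro h; apply this; push_cast; linear_combination h
    rw [Finset.sum_range_succ, ih (fun j hj => hm j (by push_cast at hj ⊢; omega))]
    set G := Complex.Gamma (m + 1) with hGdef
    set D := Complex.Gamma (m - (n : ℂ)) with hDdef
    set N := Complex.Gamma ((n : ℂ) + 2) with hNdef
    have c1 : (cbinom m (((n : ℕ) + 1 : ℕ) : ℂ))⁻¹ = N * D * (m + 1) * ((m + 1) * G)⁻¹ := by
      unfold cbinom
      rw [inv_div, show (((n + 1 : ℕ) : ℂ)) + 1 = (n : ℂ) + 2 from by push_cast; ring,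
        show m - (((n + 1 : ℕ) : ℂ)) + 1 = m - (n : ℂ) from by push_cast; ring]
      rw [mul_inv, ← hGdef, ← hDdef, ← hNdef]
      field_simp
    have c2 : (cbinom (m + 1) ((n : ℂ) + 1))⁻¹ = N * ((m - n) * D) * ((m + 1) * G)⁻¹ := by
      unfold cbinom
      rw [inv_div, show (n : ℂ) + 1 + 1 = (n : ℂ) + 2 from by ring,
        show m + 1 - ((n : ℂ) + 1) + 1 = (m - (n : ℂ)) + 1 from by ring,
        Complex.Gamma_add_one _ hmn, Complex.Gamma_add_one _ h1, ← hGdef, ← hDdef, ← hNdef]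
      ring
    have c3 : (cbinom (m + 1) ((((n : ℕ) + 1 : ℕ) : ℂ) + 1))⁻¹ =
        ((n : ℂ) + 2) * N * D * ((m + 1) * G)⁻¹ := by
      unfold cbinom
      rw [show ((((n : ℕ) + 1 : ℕ) : ℂ) + 1) + 1 = ((n : ℂ) + 2) + 1 from by push_cast; ring,
        show m + 1 - ((((n : ℕ) + 1 : ℕ) : ℂ) + 1) + 1 = m - (n : ℂ) from by push_cast; ring,
        Complex.Gamma_add_one _ hn2, Complex.Gamma_add_one _ h1, inv_div,
        ← hGdef, ← hDdef, ← hNdef]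
      ring
    have hh : ((harmonic (n + 1 + 1) : ℚ) : ℂ) =
        ((harmonic (n + 1) : ℚ) : ℂ) + 1 / ((n : ℂ) + 2) := by
      rw [harmonic_succ]; push_cast; ring
    rw [c1, c2, c3, hh, pow_succ]
    set H := ((harmonic (n + 1) : ℚ) : ℂ) with hHdef
    linear_combination ((-1:ℂ)^n*N*D*(m+1)*((m+1)*G)⁻¹*(H-(m+2)⁻¹)) * mul_inv_cancel₀ h2
      + ((-1:ℂ)^n*N*D*(m+1)*((m+1)*G)⁻¹*(m+2)⁻¹) * mul_inv_cancel₀ hn2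
end
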